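/- Let M, N₁, N₂ ∈ ℕ₀ and L ∈ {0, 1, …, M}. Let ψ₁ : ℝ → ℂ be compactly supported and N₁-times continuously differentiable with M vanishing moments (∫ x^k ψ₁(x) dx = 0 for k = 0, …, M−1), and let ψ₂ : ℝ → ℂ be compactly supported and (N₁+N₂)-times continuously differentiable. Set ψ(x₁, x₂) := ψ₁(x₁)ψ₂(x₂). Then there exists a constant C > 0 such that for every multi-index ρ with |ρ| ≤ L and every ξ ∈ ℝ²: |∂^ρ ψ̂(ξ)| ≤ C · min{1, |ξ₁|}^{M−L} · ⟨|ξ|⟩^{−N₁} · ⟨ξ₂⟩^{−N₂}. -/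

import Mathlib

open MeasureTheory Real Set
open scoped ENNReal NNReal

noncomputable section

namespace AlphaMolecules

/-- the analyst's bracket `⟨x⟩ = (1+x²)^{1/2}` -/
def brak (x : ℝ) : ℝ := Real.sqrt (1 + x ^ 2)

/-- the Euclidean norm on `ℝ × ℝ` -/
def nrm (ξ : ℝ × ℝ) : ℝ := Real.sqrt (ξ.1 ^ 2 + ξ.2 ^ 2)

/-- rotation `R_θ` by the angle `θ` -/
def rot (θ : ℝ) (v : ℝ × ℝ) : ℝ × ℝ :=
  (Real.cos θ * v.1 - Real.sin θ * v.2, Real.sin θ * v.1 + Real.cos θ * v.2)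

/-- the α-scaling matrix `A_{α,s} = diag(s, s^α)` acting on `ℝ × ℝ` -/
def ascale (α s : ℝ) (v : ℝ × ℝ) : ℝ × ℝ := (s * v.1, s ^ α * v.2)

/-- the 2-dimensional Fourier transform `ĝ(ξ) = ∫ g(x) e^{-2πi x·ξ} dx` -/
def ft2 (g : ℝ × ℝ → ℂ) (ξ : ℝ × ℝ) : ℂ :=
  ∫ x : ℝ × ℝ, Complex.exp (-2 * Real.pi * Complex.I * (x.1 * ξ.1 + x.2 * ξ.2)) * g x

/-- partial derivative in the first coordinate -/
def pd1 (f : ℝ × ℝ → ℂ) : ℝ × ℝ → ℂ := fun x => fderiv ℝ f x (1, 0)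

/-- partial derivative in the second coordinate -/
def pd2 (f : ℝ × ℝ → ℂ) : ℝ × ℝ → ℂ := fun x => fderiv ℝ f x (0, 1)

/-- the iterated partial derivative `∂^ρ` for a multi-index `ρ = (ρ₁, ρ₂)` -/
def pd (ρ : ℕ × ℕ) (f : ℝ × ℝ → ℂ) : ℝ × ℝ → ℂ := pd1^[ρ.1] (pd2^[ρ.2] f)

/-- `g` satisfies the α-molecule condition at scale `s` with constant `C`
and order `(L, M, N₁, N₂)`. -/
def MoleculeCond (α s C : ℝ) (L : ℕ) (M N₁ N₂ : ℝ) (g : ℝ × ℝ → ℂ) : Prop :=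
  ContDiff ℝ L (ft2 g) ∧
  ∀ ρ : ℕ × ℕ, ρ.1 + ρ.2 ≤ L → ∀ ξ : ℝ × ℝ,
    ‖pd ρ (ft2 g) ξ‖ ≤
      C * (min 1 (s⁻¹ + |ξ.1| + s ^ (-(1 - α)) * |ξ.2|)) ^ M
        * brak (nrm ξ) ^ (-N₁) * brak ξ.2 ^ (-N₂)

/-- the α-molecule `m(x) = s^{(1+α)/2} g(A_{α,s} R_θ (x - x₀))` -/
def mol (α s θ : ℝ) (x₀ : ℝ × ℝ) (g : ℝ × ℝ → ℂ) : ℝ × ℝ → ℂ :=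
  fun x => ((s ^ ((1 + α) / 2) : ℝ) : ℂ) * g (ascale α s (rot θ (x - x₀)))

/-- distance between two angles modulo `π` -/
def angDist (a b : ℝ) : ℝ := ⨅ n : ℤ, |a - b + n * Real.pi|

/-- the quantity `d_α` between two points of the parameter space `ℙ = ℝ₊ × 𝕋 × ℝ²` -/
def dAlpha (α : ℝ) (p q : ℝ × ℝ × (ℝ × ℝ)) : ℝ :=
  (min p.1 q.1) ^ (2 * (1 - α)) * angDist p.2.1 q.2.1 ^ 2
    + (min p.1 q.1) ^ (2 * α) * ((p.2.2.1 - q.2.2.1) ^ 2 + (p.2.2.2 - q.2.2.2) ^ 2)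
    + (min p.1 q.1) ^ (2 : ℝ)
        / (1 + (min p.1 q.1) ^ (2 * (1 - α)) * angDist p.2.1 q.2.1 ^ 2)
        * (Real.cos p.2.1 * (p.2.2.1 - q.2.2.1) - Real.sin p.2.1 * (p.2.2.2 - q.2.2.2)) ^ 2

/-- the α-scaled index distance `ω_α` -/
def omegaAlpha (α : ℝ) (p q : ℝ × ℝ × (ℝ × ℝ)) : ℝ :=
  max (p.1 / q.1) (q.1 / p.1) * (1 + dAlpha α p q)

/-- the `L²(ℝ²)` inner product `⟨f, g⟩ = ∫ f ḡ` -/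
def innerL2 (f g : ℝ × ℝ → ℂ) : ℂ := ∫ x : ℝ × ℝ, f x * (starRingEnd ℂ) (g x)

end AlphaMolecules

open AlphaMolecules

open Complex FourierTransform

lemma fourier1d_eq (ψ : ℝ → ℂ) (w : ℝ) :
    𝓕 ψ w = ∫ v : ℝ, Complex.exp (-2 * Real.pi * Complex.I * (v * w)) * ψ v := by
  rw [Real.fourier_eq']
  congr 1 with v
  rw [smul_eq_mul]
  congr 1
  have : (inner ℝ v w : ℝ) = v * w := Real.inner_apply v w
  rw [this]
  push_cast
  ring_nf

lemma ft2_prod (ψ₁ ψ₂ : ℝ → ℂ) (ξ : ℝ × ℝ) :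
    ft2 (fun x => ψ₁ x.1 * ψ₂ x.2) ξ = 𝓕 ψ₁ ξ.1 * 𝓕 ψ₂ ξ.2 := by
  rw [fourier1d_eq, fourier1d_eq, ft2, ← integral_prod_mul, ← Measure.volume_eq_prod]
  congr 1 with x
  rw [mul_add, Complex.exp_add]
  ring

lemma one_le_inf : (1 : WithTop ℕ∞) ≤ ((⊤ : ℕ∞) : WithTop ℕ∞) := by exact_mod_cast le_top

lemma hasFDerivAt_mul_prod (F G : ℝ → ℂ) (hF : Differentiable ℝ F) (hG : Differentiable ℝ G)
    (ξ : ℝ × ℝ) :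
    HasFDerivAt (fun x : ℝ × ℝ => F x.1 * G x.2)
      (G ξ.2 • ((1 : ℝ →L[ℝ] ℝ).smulRight (deriv F ξ.1)).comp (ContinuousLinearMap.fst ℝ ℝ ℝ)
        + F ξ.1 • ((1 : ℝ →L[ℝ] ℝ).smulRight (deriv G ξ.2)).comp (ContinuousLinearMap.snd ℝ ℝ ℝ)) ξ := by
  have h1 : HasFDerivAt (fun x : ℝ × ℝ => F x.1)
      (((1 : ℝ →L[ℝ] ℝ).smulRight (deriv F ξ.1)).comp (ContinuousLinearMap.fst ℝ ℝ ℝ)) ξ :=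
    ((hF ξ.1).hasDerivAt.hasFDerivAt).comp ξ (hasFDerivAt_fst)
  have h2 : HasFDerivAt (fun x : ℝ × ℝ => G x.2)
      (((1 : ℝ →L[ℝ] ℝ).smulRight (deriv G ξ.2)).comp (ContinuousLinearMap.snd ℝ ℝ ℝ)) ξ :=
    ((hG ξ.2).hasDerivAt.hasFDerivAt).comp ξ (hasFDerivAt_snd)
  have := h1.mul h2
  rw [add_comm] at this; exact this

lemma pd1_mul (F G : ℝ → ℂ) (hF : Differentiable ℝ F) (hG : Differentiable ℝ G) :
    pd1 (fun ξ => F ξ.1 * G ξ.2) = fun ξ => deriv F ξ.1 * G ξ.2 := by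
  funext ξ
  rw [pd1, (hasFDerivAt_mul_prod F G hF hG ξ).fderiv]
  simp
  ring

lemma pd2_mul (F G : ℝ → ℂ) (hF : Differentiable ℝ F) (hG : Differentiable ℝ G) :
    pd2 (fun ξ => F ξ.1 * G ξ.2) = fun ξ => F ξ.1 * deriv G ξ.2 := by
  funext ξ
  rw [pd2, (hasFDerivAt_mul_prod F G hF hG ξ).fderiv]
  simp

lemma pd_mul (F G : ℝ → ℂ) (hF : ContDiff ℝ (⊤ : ℕ∞) F) (hG : ContDiff ℝ (⊤ : ℕ∞) G) (ρ : ℕ × ℕ) :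
    pd ρ (fun ξ => F ξ.1 * G ξ.2)
      = fun ξ => iteratedDeriv ρ.1 F ξ.1 * iteratedDeriv ρ.2 G ξ.2 := by
  obtain ⟨j, k⟩ := ρ
  have key2 : ∀ k : ℕ, pd2^[k] (fun ξ : ℝ × ℝ => F ξ.1 * G ξ.2)
      = fun ξ => F ξ.1 * iteratedDeriv k G ξ.2 := by
    intro k
    induction k with
    | zero => simp [iteratedDeriv_zero]
    | succ k ih =>
      rw [Function.iterate_succ_apply', ih, iteratedDeriv_succ]
      exact pd2_mul F _ (hF.differentiable (by simp))
        (((by rw [iteratedDeriv_eq_iterate]; exact hG.iterate_deriv k : ContDiff ℝ (⊤ : ℕ∞) (iteratedDeriv k G))).differentiable (by simp))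
  have key1 : ∀ j : ℕ, ∀ (F' G' : ℝ → ℂ), ContDiff ℝ (⊤ : ℕ∞) F' → ContDiff ℝ (⊤ : ℕ∞) G' →
      pd1^[j] (fun ξ : ℝ × ℝ => F' ξ.1 * G' ξ.2)
        = fun ξ => iteratedDeriv j F' ξ.1 * G' ξ.2 := by
    intro j
    induction j with
    | zero => intros; simp [iteratedDeriv_zero]
    | succ j ih =>
      intro F' G' hF' hG'
      rw [Function.iterate_succ_apply', ih F' G' hF' hG', iteratedDeriv_succ]
      exact pd1_mul _ _ (((by rw [iteratedDeriv_eq_iterate]; exact hF'.iterate_deriv j : ContDiff ℝ (⊤ : ℕ∞) (iteratedDeriv j F'))).differentiable (by simp))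
        (hG'.differentiable (by simp))
  show pd1^[j] (pd2^[k] _) = _
  rw [key2 k, key1 j F _ hF ((by rw [iteratedDeriv_eq_iterate]; exact hG.iterate_deriv k : ContDiff ℝ (⊤ : ℕ∞) (iteratedDeriv k G)))]

lemma brak_pos (x : ℝ) : 0 < brak x :=
  Real.sqrt_pos.2 (by positivity)

lemma one_le_brak (x : ℝ) : 1 ≤ brak x := by
  have h : (1:ℝ) ≤ 1 + x^2 := by nlinarith [sq_nonneg x]
  calc (1:ℝ) = Real.sqrt 1 := by simp
    _ ≤ Real.sqrt (1 + x^2) := Real.sqrt_le_sqrt h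

lemma brak_le (x : ℝ) : brak x ≤ Real.sqrt 2 * max 1 |x| := by
  rw [brak, show Real.sqrt 2 * max 1 |x| = Real.sqrt (2 * (max 1 |x|)^2) by
    rw [Real.sqrt_mul (by norm_num), Real.sqrt_sq (le_trans zero_le_one (le_max_left _ _))]]
  apply Real.sqrt_le_sqrt
  rcases le_total |x| 1 with h | h
  · rw [max_eq_left h]; nlinarith [abs_nonneg x, _root_.sq_abs x]
  · rw [max_eq_right h]; nlinarith [abs_nonneg x, _root_.sq_abs x]

lemma brak_rpow_neg (x : ℝ) (r : ℝ) : brak x ^ (-r) = (brak x ^ r)⁻¹ :=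
  Real.rpow_neg (brak_pos x).le r

lemma cs_integrable {ψ : ℝ → ℂ} (hsupp : HasCompactSupport ψ) (hcont : Continuous ψ) :
    Integrable ψ := hcont.integrable_of_hasCompactSupport hsupp

lemma iteratedDeriv_cs {ψ : ℝ → ℂ} (N : ℕ) (hsupp : HasCompactSupport ψ)
    (hsmooth : ContDiff ℝ N ψ) (n : ℕ) (hn : n ≤ N) :
    HasCompactSupport (iteratedDeriv n ψ) ∧ Continuous (iteratedDeriv n ψ) := by
  constructor
  · rw [iteratedDeriv_eq_iterate]
    induction n with
    | zero => exact hsupp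
    | succ n ih => rw [Function.iterate_succ_apply']; exact (ih (le_of_lt (Nat.lt_of_succ_le hn))).deriv
  · exact hsmooth.continuous_iteratedDeriv n (by exact_mod_cast hn)

/-- main 1D decay estimate -/
lemma decay1d {ψ : ℝ → ℂ} (N : ℕ) (hsupp : HasCompactSupport ψ)
    (hsmooth : ContDiff ℝ N ψ) :
    ∃ C > 0, ∀ ξ : ℝ, ‖𝓕 ψ ξ‖ ≤ C * brak ξ ^ (-(N : ℝ)) := by
  have hint : ∀ n : ℕ, n ≤ (N : ℕ∞) → Integrable (iteratedDeriv n ψ) := by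
    intro n hn
    have hn' : n ≤ N := by exact_mod_cast hn
    obtain ⟨h1, h2⟩ := iteratedDeriv_cs N hsupp hsmooth n hn'
    exact cs_integrable h1 h2
  set A := ∫ x : ℝ, ‖iteratedDeriv N ψ x‖ with hA
  set B := ∫ x : ℝ, ‖ψ x‖ with hB
  have hA0 : 0 ≤ A := integral_nonneg fun x => norm_nonneg _
  have hB0 : 0 ≤ B := integral_nonneg fun x => norm_nonneg _
  have key := Real.fourier_iteratedDeriv (N := (N : ℕ∞)) hsmooth hint le_rfl
  have hFbound : ∀ (g : ℝ → ℂ), ∀ ξ : ℝ, ‖𝓕 g ξ‖ ≤ ∫ x, ‖g x‖ := fun g ξ =>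
    VectorFourier.norm_fourierIntegral_le_integral_norm _ _ _ _ _
  refine ⟨(Real.sqrt 2) ^ N * (B + A / (2 * π) ^ N) + 1, by positivity, fun ξ => ?_⟩
  have hbrak := brak_pos ξ
  rw [brak_rpow_neg, Real.rpow_natCast, ← div_eq_mul_inv, le_div_iff₀ (by positivity)]
  have step1 : ‖𝓕 ψ ξ‖ * (max 1 |ξ|) ^ N ≤ B + A / (2 * π) ^ N := by
    rcases le_total |ξ| 1 with h | h
    · rw [max_eq_left h, one_pow, mul_one]
      have h4 : (0:ℝ) ≤ A / (2 * π) ^ N := by positivity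
      linarith [hFbound ψ ξ]
    · rw [max_eq_right h]
      have h2 : ‖𝓕 (iteratedDeriv N ψ) ξ‖ ≤ A := hFbound _ ξ
      rw [key] at h2
      simp only at h2
      have hnn : ‖(2 * ↑π * Complex.I * ↑ξ : ℂ)‖ = 2 * π * |ξ| := by
        simp [Complex.norm_I, _root_.abs_of_nonneg Real.pi_nonneg]
      have h3 : ‖(2 * ↑π * Complex.I * ↑ξ) ^ N • 𝓕 ψ ξ‖
          = (2 * π) ^ N * |ξ| ^ N * ‖𝓕 ψ ξ‖ := by
        rw [norm_smul, norm_pow, hnn, mul_pow, mul_pow]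
      rw [h3] at h2
      have hpi : (0:ℝ) < (2 * π) ^ N := by positivity
      have h1ξ : (0:ℝ) ≤ |ξ| ^ N := pow_nonneg (abs_nonneg ξ) N
      have hle : ‖𝓕 ψ ξ‖ * |ξ| ^ N ≤ A / (2 * π) ^ N := by
        rw [le_div_iff₀ hpi]; nlinarith [norm_nonneg (𝓕 ψ ξ)]
      linarith
  calc ‖𝓕 ψ ξ‖ * brak ξ ^ N
      ≤ ‖𝓕 ψ ξ‖ * (Real.sqrt 2 * max 1 |ξ|) ^ N := by
        apply mul_le_mul_of_nonneg_left _ (norm_nonneg _)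
        exact pow_le_pow_left₀ (brak_pos ξ).le (brak_le ξ) N
    _ = Real.sqrt 2 ^ N * (‖𝓕 ψ ξ‖ * (max 1 |ξ|) ^ N) := by rw [mul_pow]; ring
    _ ≤ Real.sqrt 2 ^ N * (B + A / (2 * π) ^ N) := by
        apply mul_le_mul_of_nonneg_left step1 (by positivity)
    _ ≤ _ := by linarith

lemma poly_mul_cs {ψ : ℝ → ℂ} (N : ℕ) (hsupp : HasCompactSupport ψ)
    (hsmooth : ContDiff ℝ N ψ) (j : ℕ) :
    HasCompactSupport (fun x : ℝ => (-2 * ↑π * Complex.I * ↑x) ^ j • ψ x) ∧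
      ContDiff ℝ N (fun x : ℝ => (-2 * ↑π * Complex.I * ↑x) ^ j • ψ x) := by
  constructor
  · apply hsupp.mul_left
  · simp only [smul_eq_mul]
    exact ((contDiff_const.mul Complex.ofRealCLM.contDiff).pow j).mul hsmooth

lemma cs_poly_integrable {ψ : ℝ → ℂ} (hsupp : HasCompactSupport ψ)
    (hcont : Continuous ψ) (n : ℕ) :
    Integrable (fun x : ℝ => ‖x‖ ^ n * ‖ψ x‖) := by
  apply Continuous.integrable_of_hasCompactSupport
  · exact (continuous_norm.pow n).mul hcont.norm
  · apply HasCompactSupport.mul_left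
    exact hsupp.norm

/-- derivative of 1D Fourier transform identity -/
lemma iter_deriv_fourier {ψ : ℝ → ℂ} (hsupp : HasCompactSupport ψ)
    (hcont : Continuous ψ) (j : ℕ) :
    iteratedDeriv j (𝓕 ψ) = 𝓕 (fun x : ℝ => (-2 * ↑π * Complex.I * ↑x) ^ j • ψ x) := by
  apply Real.iteratedDeriv_fourier (N := (j : ℕ∞)) _ le_rfl
  intro n _
  have := cs_poly_integrable hsupp hcont n
  apply (integrable_norm_iff ?_).1
  · simpa [norm_smul] using this
  · exact Continuous.aestronglyMeasurable ((continuous_pow n).smul hcont)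

/-- uniform decay of derivatives of the Fourier transform -/
lemma deriv_decay1d {ψ : ℝ → ℂ} (N L : ℕ) (hsupp : HasCompactSupport ψ)
    (hsmooth : ContDiff ℝ N ψ) :
    ∃ C > 0, ∀ j ≤ L, ∀ ξ : ℝ, ‖iteratedDeriv j (𝓕 ψ) ξ‖ ≤ C * brak ξ ^ (-(N : ℝ)) := by
  have H : ∀ j : ℕ, ∃ C, 0 < C ∧ ∀ ξ : ℝ, ‖iteratedDeriv j (𝓕 ψ) ξ‖ ≤ C * brak ξ ^ (-(N : ℝ)) := by
    intro j
    obtain ⟨hcs, hcd⟩ := poly_mul_cs N hsupp hsmooth j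
    obtain ⟨C, hC, hb⟩ := decay1d N hcs hcd
    refine ⟨C, hC, fun ξ => ?_⟩
    rw [iter_deriv_fourier hsupp (hsmooth.continuous) j]
    exact hb ξ
  choose Cs hpos hbound using H
  have hsum0 : 0 ≤ ∑ j ∈ Finset.range (L + 1), Cs j :=
    Finset.sum_nonneg fun i _ => (hpos i).le
  refine ⟨(∑ j ∈ Finset.range (L + 1), Cs j) + 1, by linarith, fun j hj ξ => ?_⟩
  have hle : Cs j ≤ (∑ i ∈ Finset.range (L + 1), Cs i) + 1 := by
    have : Cs j ≤ ∑ i ∈ Finset.range (L + 1), Cs i :=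
      Finset.single_le_sum (fun i _ => (hpos i).le) (Finset.mem_range.2 (Nat.lt_succ_of_le hj))
    linarith
  calc ‖iteratedDeriv j (𝓕 ψ) ξ‖ ≤ Cs j * brak ξ ^ (-(N : ℝ)) := hbound j ξ
    _ ≤ _ := by
        exact mul_le_mul_of_nonneg_right hle (Real.rpow_nonneg (brak_pos ξ).le _)

lemma contDiff_iter {F : ℝ → ℂ} (hF : ContDiff ℝ (⊤ : ℕ∞) F) (k : ℕ) :
    ContDiff ℝ (⊤ : ℕ∞) (iteratedDeriv k F) := by
  rw [iteratedDeriv_eq_iterate]; exact hF.iterate_deriv k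



/-- vanishing moments give vanishing derivatives of the Fourier transform at 0 -/
lemma vanish_at_zero {ψ : ℝ → ℂ} (hsupp : HasCompactSupport ψ) (hcont : Continuous ψ)
    (M : ℕ) (hmom : ∀ k : ℕ, k < M → (∫ x : ℝ, (x : ℂ) ^ k * ψ x) = 0) :
    ∀ k : ℕ, k < M → iteratedDeriv k (𝓕 ψ) 0 = 0 := by
  intro k hk
  rw [iter_deriv_fourier hsupp hcont k, fourier1d_eq]
  have : ∀ v : ℝ, Complex.exp (-2 * ↑π * Complex.I * (↑v * (0:ℝ))) *
      ((-2 * ↑π * Complex.I * ↑v) ^ k • ψ v)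
      = (-2 * ↑π * Complex.I) ^ k * ((v : ℂ) ^ k * ψ v) := by
    intro v
    push_cast
    rw [mul_zero, mul_zero, Complex.exp_zero, one_mul, smul_eq_mul, mul_pow]
    ring
  simp only [this]
  rw [integral_const_mul, hmom k hk, mul_zero]

lemma abs_le_of_mem_uIcc {t ξ : ℝ} (ht : t ∈ Set.uIcc 0 ξ) : |t| ≤ |ξ| := by
  rw [Set.mem_uIcc] at ht
  rcases ht with ⟨h1, h2⟩ | ⟨h1, h2⟩ <;>
    exact abs_le.2 ⟨by linarith [neg_abs_le ξ, le_abs_self ξ], by linarith [neg_abs_le ξ, le_abs_self ξ]⟩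

/-- Taylor-type estimate near the origin -/
lemma taylor_small {F : ℝ → ℂ} (hF : ContDiff ℝ (⊤ : ℕ∞) F) (M : ℕ)
    (hvan : ∀ k : ℕ, k < M → iteratedDeriv k F 0 = 0) :
    ∀ m : ℕ, m ≤ M → ∃ C > 0, ∀ ξ : ℝ, |ξ| ≤ 1 →
      ‖iteratedDeriv (M - m) F ξ‖ ≤ C * |ξ| ^ m := by
  intro m
  induction m with
  | zero =>
    intro _
    obtain ⟨C, hC⟩ := (isCompact_Icc (a := (-1:ℝ)) (b := 1)).exists_bound_of_continuousOn
      ((contDiff_iter hF M).continuous.continuousOn)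
    refine ⟨max C 1, lt_of_lt_of_le one_pos (le_max_right _ _), fun ξ hξ => ?_⟩
    simp only [Nat.sub_zero, pow_zero, mul_one]
    exact le_trans (hC ξ (abs_le.1 hξ)) (le_max_left _ _)
  | succ m ih =>
    intro hm
    obtain ⟨C, hC, hCb⟩ := ih (le_of_lt (Nat.lt_of_succ_le hm))
    set j := M - (m + 1) with hj
    have hj1 : j + 1 = M - m := by omega
    have hjM : j < M := by omega
    refine ⟨C, hC, fun ξ hξ => ?_⟩
    have hdiff : ∀ t, HasDerivAt (iteratedDeriv j F) (iteratedDeriv (j+1) F t) t := by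
      intro t
      rw [iteratedDeriv_succ]
      exact (((contDiff_iter hF j).differentiable (by simp)) t).hasDerivAt
    have key : ‖iteratedDeriv j F ξ - iteratedDeriv j F 0‖ ≤ (C * |ξ| ^ m) * ‖ξ - 0‖ := by
      apply Convex.norm_image_sub_le_of_norm_hasDerivWithin_le
        (f' := fun t => iteratedDeriv (j+1) F t) (s := Set.uIcc 0 ξ)
        (fun t _ => (hdiff t).hasDerivWithinAt) _ (convex_uIcc 0 ξ)
        Set.left_mem_uIcc Set.right_mem_uIcc
      intro t ht
      have h1 : |t| ≤ |ξ| := abs_le_of_mem_uIcc ht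
      calc ‖iteratedDeriv (j+1) F t‖ = ‖iteratedDeriv (M - m) F t‖ := by rw [hj1]
        _ ≤ C * |t| ^ m := hCb t (le_trans h1 hξ)
        _ ≤ C * |ξ| ^ m := by
            apply mul_le_mul_of_nonneg_left _ hC.le
            exact pow_le_pow_left₀ (abs_nonneg t) h1 m
    rw [hvan j hjM, sub_zero, Real.norm_eq_abs, sub_zero] at key
    calc ‖iteratedDeriv j F ξ‖ ≤ C * |ξ| ^ m * |ξ| := key
      _ = C * |ξ| ^ (m + 1) := by ring

lemma brak_le_sqrt_two {x : ℝ} (hx : |x| ≤ 1) : brak x ≤ Real.sqrt 2 := by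
  have := brak_le x
  rwa [max_eq_left hx, mul_one] at this

lemma psi1_bound {ψ : ℝ → ℂ} (M N₁ L : ℕ) (hL : L ≤ M)
    (hsupp : HasCompactSupport ψ) (hsmooth : ContDiff ℝ N₁ ψ)
    (hmom : ∀ k : ℕ, k < M → (∫ x : ℝ, (x : ℂ) ^ k * ψ x) = 0) :
    ∃ C > 0, ∀ j ≤ L, ∀ ξ : ℝ,
      ‖iteratedDeriv j (𝓕 ψ) ξ‖ ≤ C * (min 1 |ξ|) ^ (M - L) * brak ξ ^ (-(N₁ : ℝ)) := by
  obtain ⟨C₁, hC₁, hC₁b⟩ := deriv_decay1d N₁ L hsupp hsmooth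
  have hcont := hsmooth.continuous
  have hFsmooth : ContDiff ℝ (⊤ : ℕ∞) (𝓕 ψ) :=
    Real.contDiff_fourier (fun n _ => cs_poly_integrable hsupp hcont n)
  have hvan := vanish_at_zero hsupp hcont M hmom
  have H : ∀ j : ℕ, ∃ C, 0 < C ∧ (j ≤ L → ∀ ξ : ℝ, |ξ| ≤ 1 →
      ‖iteratedDeriv j (𝓕 ψ) ξ‖ ≤ C * |ξ| ^ (M - L)) := by
    intro j
    by_cases hj : j ≤ L
    · obtain ⟨C, hC, hCb⟩ := taylor_small hFsmooth M hvan (M - j) (Nat.sub_le _ _)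
      have hMj : M - (M - j) = j := by omega
      refine ⟨C, hC, fun _ ξ hξ => ?_⟩
      rw [hMj] at hCb
      calc ‖iteratedDeriv j (𝓕 ψ) ξ‖ ≤ C * |ξ| ^ (M - j) := hCb ξ hξ
        _ ≤ C * |ξ| ^ (M - L) := by
            apply mul_le_mul_of_nonneg_left _ hC.le
            exact pow_le_pow_of_le_one (abs_nonneg ξ) hξ (by omega)
    · exact ⟨1, one_pos, fun h => absurd h hj⟩
  choose Cs hpos hbound using H
  have hsum0 : 0 ≤ ∑ i ∈ Finset.range (L + 1), Cs i :=
    Finset.sum_nonneg fun i _ => (hpos i).le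
  set T := (∑ i ∈ Finset.range (L + 1), Cs i) + 1 with hT
  have hT0 : 0 < T := by linarith
  have hsqrt2 : (0:ℝ) < Real.sqrt 2 ^ N₁ := by positivity
  refine ⟨C₁ + T * Real.sqrt 2 ^ N₁, by positivity, fun j hj ξ => ?_⟩
  have hbrak := brak_pos ξ
  have hbrakn : (0:ℝ) < brak ξ ^ ((N₁ : ℝ)) := Real.rpow_pos_of_pos hbrak _
  have hrw : brak ξ ^ (-(N₁ : ℝ)) = (brak ξ ^ (N₁:ℕ))⁻¹ := by
    rw [Real.rpow_neg hbrak.le, Real.rpow_natCast]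
  rcases le_total 1 |ξ| with h | h
  · rw [min_eq_left h, one_pow, mul_one]
    calc ‖iteratedDeriv j (𝓕 ψ) ξ‖ ≤ C₁ * brak ξ ^ (-(N₁ : ℝ)) := hC₁b j hj ξ
      _ ≤ _ := by
          apply mul_le_mul_of_nonneg_right _ (Real.rpow_nonneg hbrak.le _)
          nlinarith
  · rw [min_eq_right h]
    have hTj : Cs j ≤ T := by
      have : Cs j ≤ ∑ i ∈ Finset.range (L + 1), Cs i :=
        Finset.single_le_sum (fun i _ => (hpos i).le) (Finset.mem_range.2 (Nat.lt_succ_of_le hj))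
      linarith
    have hpow0 : (0:ℝ) ≤ |ξ| ^ (M - L) := pow_nonneg (abs_nonneg ξ) _
    have hb2 : brak ξ ^ (N₁:ℕ) ≤ Real.sqrt 2 ^ N₁ :=
      pow_le_pow_left₀ hbrak.le (brak_le_sqrt_two h) N₁
    have hinv : (Real.sqrt 2 ^ N₁)⁻¹ ≤ brak ξ ^ (-(N₁ : ℝ)) := by
      rw [hrw]
      exact inv_anti₀ (by positivity) hb2
    calc ‖iteratedDeriv j (𝓕 ψ) ξ‖ ≤ Cs j * |ξ| ^ (M - L) := hbound j hj ξ h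
      _ = (Cs j * Real.sqrt 2 ^ N₁) * |ξ| ^ (M - L) * (Real.sqrt 2 ^ N₁)⁻¹ := by
          field_simp
      _ ≤ (C₁ + T * Real.sqrt 2 ^ N₁) * |ξ| ^ (M - L) * brak ξ ^ (-(N₁ : ℝ)) := by
          apply mul_le_mul _ hinv (by positivity) _
          · apply mul_le_mul_of_nonneg_right _ hpow0
            nlinarith
          · positivity

lemma brak_nrm_le (ξ : ℝ × ℝ) : brak (nrm ξ) ≤ brak ξ.1 * brak ξ.2 := by
  have h1 : nrm ξ ^ 2 = ξ.1 ^ 2 + ξ.2 ^ 2 :=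
    Real.sq_sqrt (by positivity)
  rw [brak, brak, brak, h1, ← Real.sqrt_mul (by positivity)]
  apply Real.sqrt_le_sqrt
  nlinarith [sq_nonneg (ξ.1 * ξ.2)]


/-- from the proof of Proposition 3.9(iii): for a separable generator
`ψ = ψ₁ ⊗ ψ₂` with `ψ₁ ∈ C₀^{N₁}` having `M` vanishing moments and `ψ₂ ∈ C₀^{N₁+N₂}`,
the Fourier transform satisfies
`|∂^ρ ψ̂(ξ)| ≤ C min{1,|ξ₁|}^{M−L} ⟨|ξ|⟩^{-N₁} ⟨ξ₂⟩^{-N₂}` for all `|ρ| ≤ L ≤ M`. -/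
theorem stmt15 (M N₁ N₂ L : ℕ) (hL : L ≤ M)
    (ψ₁ ψ₂ : ℝ → ℂ)
    (h₁supp : HasCompactSupport ψ₁) (h₁smooth : ContDiff ℝ N₁ ψ₁)
    (h₁mom : ∀ k : ℕ, k < M → (∫ x : ℝ, (x : ℂ) ^ k * ψ₁ x) = 0)
    (h₂supp : HasCompactSupport ψ₂) (h₂smooth : ContDiff ℝ (N₁ + N₂) ψ₂) :
    ∃ C > (0 : ℝ), ∀ ρ : ℕ × ℕ, ρ.1 + ρ.2 ≤ L → ∀ ξ : ℝ × ℝ,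
      ‖pd ρ (ft2 (fun x => ψ₁ x.1 * ψ₂ x.2)) ξ‖
        ≤ C * (min 1 |ξ.1|) ^ ((M : ℝ) - (L : ℝ))
            * brak (nrm ξ) ^ (-(N₁ : ℝ)) * brak ξ.2 ^ (-(N₂ : ℝ)) := by
  obtain ⟨C₁, hC₁, hb₁⟩ := psi1_bound M N₁ L hL h₁supp h₁smooth h₁mom
  obtain ⟨C₂, hC₂, hb₂⟩ := deriv_decay1d (N₁ + N₂) L h₂supp h₂smooth
  refine ⟨C₁ * C₂, mul_pos hC₁ hC₂, fun ρ hρ ξ => ?_⟩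
  have hF1 : ContDiff ℝ (⊤ : ℕ∞) (𝓕 ψ₁) :=
    Real.contDiff_fourier (fun n _ => cs_poly_integrable h₁supp h₁smooth.continuous n)
  have hF2 : ContDiff ℝ (⊤ : ℕ∞) (𝓕 ψ₂) :=
    Real.contDiff_fourier (fun n _ => cs_poly_integrable h₂supp h₂smooth.continuous n)
  have heq : ft2 (fun x => ψ₁ x.1 * ψ₂ x.2) = fun ξ : ℝ × ℝ => 𝓕 ψ₁ ξ.1 * 𝓕 ψ₂ ξ.2 :=
    funext (ft2_prod ψ₁ ψ₂)
  rw [heq, pd_mul _ _ hF1 hF2]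
  simp only [norm_mul]
  have e1 := hb₁ ρ.1 (le_trans (Nat.le_add_right ρ.1 ρ.2) hρ) ξ.1
  have e2 := hb₂ ρ.2 (le_trans (Nat.le_add_left ρ.2 ρ.1) hρ) ξ.2
  have hb1 := brak_pos ξ.1
  have hb2p := brak_pos ξ.2
  have hbn := brak_pos (nrm ξ)
  have hm0 : (0:ℝ) ≤ min 1 |ξ.1| := le_min zero_le_one (abs_nonneg _)
  rw [show (-((N₁ + N₂ : ℕ) : ℝ)) = (-(N₁:ℝ)) + (-(N₂:ℝ)) by push_cast; ring,
    Real.rpow_add hb2p] at e2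
  have key : brak ξ.1 ^ (-(N₁:ℝ)) * brak ξ.2 ^ (-(N₁:ℝ)) ≤ brak (nrm ξ) ^ (-(N₁:ℝ)) := by
    rw [← Real.mul_rpow hb1.le hb2p.le]
    exact Real.rpow_le_rpow_of_nonpos hbn (brak_nrm_le ξ) (neg_nonpos.2 (Nat.cast_nonneg _))
  have hconv : (min 1 |ξ.1|) ^ ((M:ℝ) - (L:ℝ)) = (min 1 |ξ.1|) ^ ((M - L : ℕ)) := by
    rw [show ((M:ℝ) - (L:ℝ)) = ((M - L : ℕ) : ℝ) by rw [Nat.cast_sub hL], Real.rpow_natCast]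
  rw [hconv]
  have hm : (0:ℝ) ≤ (min 1 |ξ.1|) ^ (M - L : ℕ) := pow_nonneg hm0 _
  calc ‖iteratedDeriv ρ.1 (𝓕 ψ₁) ξ.1‖ * ‖iteratedDeriv ρ.2 (𝓕 ψ₂) ξ.2‖
      ≤ (C₁ * (min 1 |ξ.1|) ^ (M - L : ℕ) * brak ξ.1 ^ (-(N₁:ℝ)))
          * (C₂ * (brak ξ.2 ^ (-(N₁:ℝ)) * brak ξ.2 ^ (-(N₂:ℝ)))) :=
        mul_le_mul e1 e2 (norm_nonneg _)
          (mul_nonneg (mul_nonneg hC₁.le hm) (Real.rpow_nonneg hb1.le _))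
    _ = (C₁ * C₂ * (min 1 |ξ.1|) ^ (M - L : ℕ))
          * (brak ξ.1 ^ (-(N₁:ℝ)) * brak ξ.2 ^ (-(N₁:ℝ))) * brak ξ.2 ^ (-(N₂:ℝ)) := by
        ring
    _ ≤ (C₁ * C₂ * (min 1 |ξ.1|) ^ (M - L : ℕ))
          * brak (nrm ξ) ^ (-(N₁:ℝ)) * brak ξ.2 ^ (-(N₂:ℝ)) := by
        apply mul_le_mul_of_nonneg_right _ (Real.rpow_nonneg hb2p.le _)
        exact mul_le_mul_of_nonneg_left key
          (mul_nonneg (mul_pos hC₁ hC₂).le hm)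
    _ = C₁ * C₂ * (min 1 |ξ.1|) ^ (M - L : ℕ) * brak (nrm ξ) ^ (-(N₁:ℝ))
          * brak ξ.2 ^ (-(N₂:ℝ)) := by ring
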